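/- Let R be a commutative Noetherian ring and *R its ultrapower. An ideal q of R is p-primary if and only if the extension q·*R is p·*R-primary in *R. -/

import Mathlib

open Filter

/-- The diagonal embedding of `R` into its ultrapower `*R = (ι → R)/U`. -/
noncomputable def diag {ι : Type*} (U : Ultrafilter ι) (R : Type*) [CommRing R] :
    R →+* Filter.Germ (U : Filter ι) R :=
  (Filter.Germ.coeRingHom (U : Filter ι)).comp (Pi.constRingHom ι R)

section Aux

variable {ι R : Type*} [CommRing R] (U : Ultrafilter ι)

/-- The ideal of germs that are a.e. in `q`. -/
def germIdeal (q : Ideal R) : Ideal (Filter.Germ (U : Filter ι) R) where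
  carrier := {x | x.LiftPred (· ∈ q)}
  add_mem' {x y} hx hy := by
    induction x using Filter.Germ.inductionOn with | h f =>
    induction y using Filter.Germ.inductionOn with | h g =>
    simp only [Set.mem_setOf_eq, Filter.Germ.liftPred_coe] at hx hy
    rw [Set.mem_setOf_eq, ← Filter.Germ.coe_add, Filter.Germ.liftPred_coe]
    filter_upwards [hx, hy] with i h1 h2 using q.add_mem h1 h2
  zero_mem' := by
    rw [Set.mem_setOf_eq, ← Filter.Germ.coe_zero, Filter.Germ.liftPred_coe]
    exact Filter.Eventually.of_forall fun _ => q.zero_mem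
  smul_mem' c x hx := by
    induction c using Filter.Germ.inductionOn with | h f =>
    induction x using Filter.Germ.inductionOn with | h g =>
    simp only [Set.mem_setOf_eq, Filter.Germ.liftPred_coe] at hx
    rw [Set.mem_setOf_eq, smul_eq_mul, ← Filter.Germ.coe_mul, Filter.Germ.liftPred_coe]
    filter_upwards [hx] with i h using q.mul_mem_left _ h

theorem mem_germIdeal_coe {q : Ideal R} {f : ι → R} :
    (↑f : Filter.Germ (U : Filter ι) R) ∈ germIdeal U q ↔ ∀ᶠ i in (U : Filter ι), f i ∈ q :=
  Filter.Germ.liftPred_coe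

theorem diag_apply (r : R) : diag U R r = (↑r : Filter.Germ (U : Filter ι) R) := rfl

theorem diag_mem_germIdeal {q : Ideal R} {r : R} :
    diag U R r ∈ germIdeal U q ↔ r ∈ q := by
  rw [diag_apply]
  exact Filter.Germ.liftPred_const_iff

theorem map_diag_eq (q : Ideal R) [IsNoetherianRing R] :
    q.map (diag U R) = germIdeal U q := by
  apply le_antisymm
  · rw [Ideal.map_le_iff_le_comap]
    intro r hr
    exact (diag_mem_germIdeal U).2 hr
  · intro x hx
    induction x using Filter.Germ.inductionOn with | h f =>
    rw [mem_germIdeal_coe] at hx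
    -- replace f by a function everywhere in q
    classical
    set f' : ι → R := fun i => if f i ∈ q then f i else 0 with hf'
    have hff' : (↑f : Filter.Germ (U : Filter ι) R) = ↑f' := by
      apply Filter.Germ.coe_eq.2
      filter_upwards [hx] with i hi
      simp [hf', hi]
    have hf'mem : ∀ i, f' i ∈ q := fun i => by
      by_cases h : f i ∈ q <;> simp [hf', h, q.zero_mem]
    obtain ⟨s, hs⟩ := (isNoetherianRing_iff_ideal_fg R).1 ‹_› q
    have hc : ∀ i, ∃ c : R → R, ∑ g ∈ s, c g * g = f' i := by
      intro i
      have := hf'mem i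
      rw [← hs] at this
      obtain ⟨c, -, hc⟩ := Submodule.mem_span_finset.1 this
      exact ⟨c, by simpa [smul_eq_mul] using hc⟩
    choose c hcf using hc
    rw [hff']
    have key : (↑f' : Filter.Germ (U : Filter ι) R) =
        ∑ g ∈ s, (↑(fun i => c i g) : Filter.Germ (U : Filter ι) R) * (diag U R g) := by
      have h1 : ∀ g : R, (↑(fun i => c i g) : Filter.Germ (U : Filter ι) R) * diag U R g
          = ↑(fun i => c i g * g) := fun g => rfl
      simp only [h1]
      have h2 := map_sum (Filter.Germ.coeRingHom (U : Filter ι))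
        (fun g => (fun i => c i g * g : ι → R)) s
      have h3 : (Filter.Germ.coeRingHom (U : Filter ι)) (∑ g ∈ s, (fun i => c i g * g : ι → R))
          = (↑f' : Filter.Germ (U : Filter ι) R) := by
        rw [show (∑ g ∈ s, (fun i => c i g * g : ι → R)) = f' from
          funext fun i => by rw [Finset.sum_apply]; exact hcf i]
        rfl
      rw [← h3, h2]
      rfl
    rw [key]
    exact Ideal.sum_mem _ fun g hg => Ideal.mul_mem_left _ _
      (Ideal.mem_map_of_mem _ (by rw [← hs]; exact Ideal.subset_span hg))

theorem germIdeal_radical (q : Ideal R) [IsNoetherianRing R] :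
    (germIdeal U q).radical = germIdeal U q.radical := by
  obtain ⟨N, hN⟩ := Ideal.exists_radical_pow_le_of_fg q
    ((isNoetherianRing_iff_ideal_fg R).1 ‹_› _)
  apply le_antisymm
  · intro x hx
    obtain ⟨n, hn⟩ := hx
    induction x using Filter.Germ.inductionOn with | h f =>
    rw [← Filter.Germ.coe_pow, mem_germIdeal_coe] at hn
    rw [mem_germIdeal_coe]
    filter_upwards [hn] with i hi using ⟨n, hi⟩
  · intro x hx
    induction x using Filter.Germ.inductionOn with | h f =>
    rw [mem_germIdeal_coe] at hx
    refine ⟨N, ?_⟩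
    rw [← Filter.Germ.coe_pow, mem_germIdeal_coe]
    filter_upwards [hx] with i hi
    exact hN (Ideal.pow_mem_pow hi N)

theorem germIdeal_ne_top {q : Ideal R} (hq : q ≠ ⊤) : germIdeal U q ≠ ⊤ := by
  intro h
  apply hq
  rw [Ideal.eq_top_iff_one] at h ⊢
  have : diag U R 1 ∈ germIdeal U q := by rw [map_one]; exact h
  exact (diag_mem_germIdeal U).1 this

end Aux

/-- For a commutative Noetherian ring `R` with ultrapower `*R`, a prime `p` and an ideal
`q` of `R`: `q` is `p`-primary iff the extension `q·*R` is `p·*R`-primary. -/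
theorem ultrapower_primary_iff {ι R : Type*} [CommRing R] [IsNoetherianRing R]
    (U : Ultrafilter ι) (p q : Ideal R) (hp : p.IsPrime) :
    (q.IsPrimary ∧ q.radical = p) ↔
      ((q.map (diag U R)).IsPrimary ∧
        (q.map (diag U R)).radical = p.map (diag U R)) := by
  rw [map_diag_eq U q, map_diag_eq U p, germIdeal_radical U q]
  simp only [Ideal.isPrimary_iff]
  have germIdeal_inj : ∀ a b : Ideal R, germIdeal U a = germIdeal U b → a = b := by
    intro a b h
    ext r
    rw [← diag_mem_germIdeal U (q := a), ← diag_mem_germIdeal U (q := b), h]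
  constructor
  · rintro ⟨⟨hqt, hq⟩, hrad⟩
    refine ⟨⟨germIdeal_ne_top U hqt, ?_⟩, by rw [hrad]⟩
    intro x y hxy
    induction x using Filter.Germ.inductionOn with | h f =>
    induction y using Filter.Germ.inductionOn with | h g =>
    rw [← Filter.Germ.coe_mul, mem_germIdeal_coe] at hxy
    have hsub : {i | f i * g i ∈ q} ⊆ {i | f i ∈ q} ∪ {i | g i ∈ q.radical} := by
      intro i hi
      exact hq hi
    have : {i | f i ∈ q} ∪ {i | g i ∈ q.radical} ∈ U := U.toFilter.sets_of_superset hxy hsub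
    rcases (Ultrafilter.union_mem_iff).1 this with h | h
    · exact Or.inl ((mem_germIdeal_coe U).2 h)
    · right
      rw [germIdeal_radical U q]
      exact (mem_germIdeal_coe U).2 h
  · rintro ⟨⟨hqt, hq⟩, hrad⟩
    have hradq : q.radical = p := germIdeal_inj _ _ hrad
    have hq1 : q ≠ ⊤ := by
      intro h
      apply hqt
      rw [Ideal.eq_top_iff_one] at h ⊢
      exact (diag_mem_germIdeal U (r := 1)).2 h
    refine ⟨⟨hq1, ?_⟩, hradq⟩
    intro x y hxy
    have : diag U R x * diag U R y ∈ germIdeal U q := by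
      rw [← map_mul]; exact (diag_mem_germIdeal U).2 hxy
    rcases hq this with h | h
    · exact Or.inl ((diag_mem_germIdeal U).1 h)
    · right
      rw [germIdeal_radical U q] at h
      exact (diag_mem_germIdeal U).1 h
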